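/- Let F11 ∈ ℂ^{n1×n1}, F12 ∈ ℂ^{n1×n2}, F21 ∈ ℂ^{n2×n1}, F22 ∈ ℂ^{n2×n2} with F22 invertible, G1 ∈ ℂ^{n1×m}, G2 ∈ ℂ^{n2×m}, H1 ∈ ℂ^{m×n1}, H2 ∈ ℂ^{m×n2}, K ∈ ℂ^{m×m}. For ε > 0 set F_ε = [[F11, F12],[F21/ε, F22/ε]], G_ε = [[G1],[G2/ε]], H = [H1 H2], and define F0 = F11 − F12F22⁻¹F21, G0 = G1 − F12F22⁻¹G2, H0 = H1 − H2F22⁻¹F21, K0 = K − H2F22⁻¹G2. Fix s ∈ ℂ with s ≠ 0 such that sI − F0 is invertible. Then for all sufficiently small ε > 0 the matrix sI − F_ε is invertible, and H(sI − F_ε)⁻¹G_ε + K converges to H0(sI − F0)⁻¹G0 + K0 as ε → 0⁺. -/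

import Mathlib

open Matrix Filter ComplexOrder

lemma aux_tendsto_inv_and_isUnit {α : Type*} {n : ℕ} {l : Filter α} {f : α → Matrix (Fin n) (Fin n) ℂ}
    {A : Matrix (Fin n) (Fin n) ℂ} (hf : Tendsto f l (nhds A)) (hA : IsUnit A) :
    Tendsto (fun x => (f x)⁻¹) l (nhds A⁻¹) ∧ ∀ᶠ x in l, IsUnit (f x) := by
  have hdetA : A.det ≠ 0 := by
    simpa [isUnit_iff_ne_zero] using (Matrix.isUnit_iff_isUnit_det A).mp hA
  have hcdet : Continuous fun M : Matrix (Fin n) (Fin n) ℂ => M.det :=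
    Continuous.matrix_det continuous_id
  have hcadj : Continuous fun M : Matrix (Fin n) (Fin n) ℂ => M.adjugate :=
    Continuous.matrix_adjugate continuous_id
  have hdet : Tendsto (fun x => (f x).det) l (nhds A.det) := (hcdet.tendsto A).comp hf
  have hadj : Tendsto (fun x => (f x).adjugate) l (nhds A.adjugate) := (hcadj.tendsto A).comp hf
  have hev : ∀ᶠ x in l, IsUnit (f x) := by
    filter_upwards [hdet.eventually (eventually_ne_nhds hdetA)] with x hx
    exact (Matrix.isUnit_iff_isUnit_det _).mpr (isUnit_iff_ne_zero.mpr hx)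
  refine ⟨?_, hev⟩
  have hrw : ∀ B : Matrix (Fin n) (Fin n) ℂ, B⁻¹ = (B.det)⁻¹ • B.adjugate := fun B => by
    rw [Matrix.inv_def, Ring.inverse_eq_inv']
  simp_rw [hrw]
  exact (hdet.inv₀ hdetA).smul hadj

set_option maxHeartbeats 1000000 in
lemma aux_key_algebra {n1 n2 m : ℕ}
    (F11 : Matrix (Fin n1) (Fin n1) ℂ) (F12 : Matrix (Fin n1) (Fin n2) ℂ)
    (F21 : Matrix (Fin n2) (Fin n1) ℂ) (F22 : Matrix (Fin n2) (Fin n2) ℂ)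
    (G1 : Matrix (Fin n1) (Fin m) ℂ) (G2 : Matrix (Fin n2) (Fin m) ℂ)
    (H1 : Matrix (Fin m) (Fin n1) ℂ) (H2 : Matrix (Fin m) (Fin n2) ℂ)
    (K : Matrix (Fin m) (Fin m) ℂ)
    (s ε : ℂ) (hε : ε ≠ 0)
    (hN : IsUnit (F22 - (ε * s) • (1 : Matrix (Fin n2) (Fin n2) ℂ)))
    (hS : IsUnit (s • (1 : Matrix (Fin n1) (Fin n1) ℂ) - F11
        + F12 * (F22 - (ε * s) • 1)⁻¹ * F21)) :
    IsUnit (s • (1 : Matrix (Fin n1 ⊕ Fin n2) (Fin n1 ⊕ Fin n2) ℂ)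
        - fromBlocks F11 F12 (ε⁻¹ • F21) (ε⁻¹ • F22)) ∧
    fromCols H1 H2 *
        (s • (1 : Matrix (Fin n1 ⊕ Fin n2) (Fin n1 ⊕ Fin n2) ℂ)
          - fromBlocks F11 F12 (ε⁻¹ • F21) (ε⁻¹ • F22))⁻¹ *
        fromRows G1 (ε⁻¹ • G2) + K
      = (H1 - H2 * (F22 - (ε * s) • 1)⁻¹ * F21) *
          (s • (1 : Matrix (Fin n1) (Fin n1) ℂ) - F11
            + F12 * (F22 - (ε * s) • 1)⁻¹ * F21)⁻¹ *
          (G1 - F12 * (F22 - (ε * s) • 1)⁻¹ * G2)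
        + (K - H2 * (F22 - (ε * s) • 1)⁻¹ * G2) := by
  set N : Matrix (Fin n2) (Fin n2) ℂ := F22 - (ε * s) • 1 with hNdef
  set e : Matrix (Fin n2) (Fin n2) ℂ := N⁻¹ with hedef
  set S : Matrix (Fin n1) (Fin n1) ℂ := s • 1 - F11 + F12 * e * F21 with hSdef
  set t : Matrix (Fin n1) (Fin n1) ℂ := S⁻¹ with htdef
  have he1 : N * e = 1 := Matrix.mul_nonsing_inv N ((Matrix.isUnit_iff_isUnit_det N).mp hN)
  have ht1 : S * t = 1 := Matrix.mul_nonsing_inv S ((Matrix.isUnit_iff_isUnit_det S).mp hS)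
  have hSX : ∀ {k : ℕ} (X : Matrix (Fin n1) (Fin k) ℂ),
      (s • 1 - F11) * X + F12 * (e * (F21 * X)) = S * X := by
    intro k X
    rw [hSdef, Matrix.add_mul, Matrix.mul_assoc, Matrix.mul_assoc]
  have hSt : ∀ {k : ℕ} (X : Matrix (Fin n1) (Fin k) ℂ), S * (t * X) = X := by
    intro k X; rw [← Matrix.mul_assoc, ht1, Matrix.one_mul]
  have hNe : ∀ {k : ℕ} (X : Matrix (Fin n2) (Fin k) ℂ), N * (e * X) = X := by
    intro k X; rw [← Matrix.mul_assoc, he1, Matrix.one_mul]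
  -- rewrite the big matrix as a single fromBlocks
  have hA : s • (1 : Matrix (Fin n1 ⊕ Fin n2) (Fin n1 ⊕ Fin n2) ℂ)
      - fromBlocks F11 F12 (ε⁻¹ • F21) (ε⁻¹ • F22)
      = fromBlocks (s • 1 - F11) (-F12) (-(ε⁻¹ • F21)) (-(ε⁻¹ • N)) := by
    have hD : s • (1 : Matrix (Fin n2) (Fin n2) ℂ) - ε⁻¹ • F22 = -(ε⁻¹ • N) := by
      rw [hNdef, smul_sub, neg_sub, smul_smul]
      congr 1
      rw [show ε⁻¹ * (ε * s) = s by field_simp]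
    rw [← hD, ← Matrix.fromBlocks_one, Matrix.fromBlocks_smul, sub_eq_add_neg,
      Matrix.fromBlocks_neg, Matrix.fromBlocks_add]
    congr 1 <;> simp [sub_eq_add_neg]
  set M : Matrix (Fin n1 ⊕ Fin n2) (Fin n1 ⊕ Fin n2) ℂ :=
    fromBlocks t (-(ε • (t * F12 * e))) (-(e * F21 * t))
      (-(ε • e) + ε • (e * F21 * t * F12 * e)) with hMdef
  have hb11 : (s • 1 - F11) * t + -F12 * -(e * F21 * t) = 1 := by
    rw [Matrix.neg_mul, Matrix.mul_neg, neg_neg, Matrix.mul_assoc e F21 t, hSX, ht1]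
  have hb12 : (s • 1 - F11) * -(ε • (t * F12 * e))
      + -F12 * (-(ε • e) + ε • (e * F21 * t * F12 * e)) = 0 := by
    have k1 : (s • 1 - F11) * (t * (F12 * e)) + F12 * (e * (F21 * (t * (F12 * e))))
        = F12 * e := by rw [hSX, hSt]
    calc (s • 1 - F11) * -(ε • (t * F12 * e))
          + -F12 * (-(ε • e) + ε • (e * F21 * t * F12 * e))
        = ε • (F12 * e) - ε • ((s • 1 - F11) * (t * (F12 * e))
            + F12 * (e * (F21 * (t * (F12 * e))))) := by
          simp only [Matrix.mul_assoc, Matrix.mul_smul, Matrix.smul_mul, Matrix.mul_neg,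
            Matrix.neg_mul, Matrix.mul_add, neg_neg]
          module
      _ = 0 := by rw [k1, sub_self]
  have hb21 : -(ε⁻¹ • F21) * t + -(ε⁻¹ • N) * -(e * F21 * t) = 0 := by
    calc -(ε⁻¹ • F21) * t + -(ε⁻¹ • N) * -(e * F21 * t)
        = ε⁻¹ • (N * (e * (F21 * t))) - ε⁻¹ • (F21 * t) := by
          simp only [Matrix.mul_assoc, Matrix.mul_smul, Matrix.smul_mul, Matrix.mul_neg,
            Matrix.neg_mul, neg_neg]
          module
      _ = 0 := by rw [hNe, sub_self]
  have hb22 : -(ε⁻¹ • F21) * -(ε • (t * F12 * e))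
      + -(ε⁻¹ • N) * (-(ε • e) + ε • (e * F21 * t * F12 * e)) = 1 := by
    calc -(ε⁻¹ • F21) * -(ε • (t * F12 * e))
          + -(ε⁻¹ • N) * (-(ε • e) + ε • (e * F21 * t * F12 * e))
        = (F21 * (t * (F12 * e)) + N * e)
            - N * (e * (F21 * (t * (F12 * e)))) := by
          simp only [Matrix.mul_assoc, Matrix.mul_smul, Matrix.smul_mul, Matrix.mul_neg,
            Matrix.neg_mul, Matrix.mul_add, neg_neg]
          match_scalars <;> field_simp
      _ = 1 := by rw [hNe, he1]; abel
  have hAM : (s • (1 : Matrix (Fin n1 ⊕ Fin n2) (Fin n1 ⊕ Fin n2) ℂ)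
      - fromBlocks F11 F12 (ε⁻¹ • F21) (ε⁻¹ • F22)) * M = 1 := by
    rw [hA, hMdef, Matrix.fromBlocks_multiply, ← Matrix.fromBlocks_one]
    rw [hb11, hb12, hb21, hb22]
  refine ⟨@isUnit_of_invertible _ _ _ (invertibleOfRightInverse _ _ hAM), ?_⟩
  rw [Matrix.inv_eq_right_inv hAM, hMdef, Matrix.fromCols_mul_fromBlocks,
    Matrix.fromCols_mul_fromRows]
  simp only [Matrix.mul_assoc, Matrix.mul_smul, Matrix.smul_mul, Matrix.mul_neg,
    Matrix.neg_mul, Matrix.mul_add, Matrix.add_mul, Matrix.mul_sub, Matrix.sub_mul,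
    neg_neg, smul_sub, smul_add]
  match_scalars <;> field_simp

theorem perturbed_transfer_function_convergence {n1 n2 m : ℕ}
    (F11 : Matrix (Fin n1) (Fin n1) ℂ) (F12 : Matrix (Fin n1) (Fin n2) ℂ)
    (F21 : Matrix (Fin n2) (Fin n1) ℂ) (F22 : Matrix (Fin n2) (Fin n2) ℂ)
    (hF22 : IsUnit F22)
    (G1 : Matrix (Fin n1) (Fin m) ℂ) (G2 : Matrix (Fin n2) (Fin m) ℂ)
    (H1 : Matrix (Fin m) (Fin n1) ℂ) (H2 : Matrix (Fin m) (Fin n2) ℂ)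
    (K : Matrix (Fin m) (Fin m) ℂ)
    (s : ℂ) (hs : s ≠ 0)
    (hF0 : IsUnit (s • (1 : Matrix (Fin n1) (Fin n1) ℂ) - (F11 - F12 * F22⁻¹ * F21))) :
    (∀ᶠ ε in nhdsWithin (0 : ℝ) (Set.Ioi 0),
      IsUnit (s • (1 : Matrix (Fin n1 ⊕ Fin n2) (Fin n1 ⊕ Fin n2) ℂ)
        - fromBlocks F11 F12 ((ε : ℂ)⁻¹ • F21) ((ε : ℂ)⁻¹ • F22))) ∧
    Tendsto
      (fun ε : ℝ =>
        fromCols H1 H2 *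
            (s • (1 : Matrix (Fin n1 ⊕ Fin n2) (Fin n1 ⊕ Fin n2) ℂ)
              - fromBlocks F11 F12 ((ε : ℂ)⁻¹ • F21) ((ε : ℂ)⁻¹ • F22))⁻¹ *
            fromRows G1 ((ε : ℂ)⁻¹ • G2) + K)
      (nhdsWithin (0 : ℝ) (Set.Ioi 0))
      (nhds ((H1 - H2 * F22⁻¹ * F21) *
          (s • (1 : Matrix (Fin n1) (Fin n1) ℂ) - (F11 - F12 * F22⁻¹ * F21))⁻¹ *
          (G1 - F12 * F22⁻¹ * G2) + (K - H2 * F22⁻¹ * G2))) := by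
  have hNcont : Continuous (fun ε : ℝ =>
      F22 - ((ε : ℂ) * s) • (1 : Matrix (Fin n2) (Fin n2) ℂ)) :=
    continuous_const.sub ((Complex.continuous_ofReal.mul continuous_const).smul
      continuous_const)
  have hNt : Tendsto (fun ε : ℝ => F22 - ((ε : ℂ) * s) • (1 : Matrix (Fin n2) (Fin n2) ℂ))
      (nhdsWithin (0 : ℝ) (Set.Ioi 0)) (nhds F22) := by
    have h0 := hNcont.tendsto 0
    simp only [Complex.ofReal_zero, zero_mul, zero_smul, sub_zero] at h0
    exact h0.mono_left nhdsWithin_le_nhds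
  obtain ⟨hEinv, hNunit⟩ := aux_tendsto_inv_and_isUnit hNt hF22
  have hS0 : s • (1 : Matrix (Fin n1) (Fin n1) ℂ) - F11 + F12 * F22⁻¹ * F21
      = s • (1 : Matrix (Fin n1) (Fin n1) ℂ) - (F11 - F12 * F22⁻¹ * F21) := by abel
  have hS0unit : IsUnit (s • (1 : Matrix (Fin n1) (Fin n1) ℂ) - F11 + F12 * F22⁻¹ * F21) := by
    rw [hS0]; exact hF0
  have hScont : Continuous (fun X : Matrix (Fin n2) (Fin n2) ℂ =>
      s • (1 : Matrix (Fin n1) (Fin n1) ℂ) - F11 + F12 * X * F21) :=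
    continuous_const.add ((Continuous.matrix_mul continuous_const continuous_id).matrix_mul
      continuous_const)
  have hSt : Tendsto (fun ε : ℝ => s • (1 : Matrix (Fin n1) (Fin n1) ℂ) - F11
        + F12 * (F22 - ((ε : ℂ) * s) • 1)⁻¹ * F21)
      (nhdsWithin (0 : ℝ) (Set.Ioi 0))
      (nhds (s • (1 : Matrix (Fin n1) (Fin n1) ℂ) - F11 + F12 * F22⁻¹ * F21)) :=
    (hScont.tendsto _).comp hEinv
  obtain ⟨hSinv, hSunit⟩ := aux_tendsto_inv_and_isUnit hSt hS0unit
  have hev : ∀ᶠ (ε : ℝ) in nhdsWithin (0 : ℝ) (Set.Ioi 0),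
      0 < ε ∧ IsUnit (F22 - ((ε : ℂ) * s) • (1 : Matrix (Fin n2) (Fin n2) ℂ)) ∧
      IsUnit (s • (1 : Matrix (Fin n1) (Fin n1) ℂ) - F11
        + F12 * (F22 - ((ε : ℂ) * s) • 1)⁻¹ * F21) := by
    filter_upwards [self_mem_nhdsWithin, hNunit, hSunit] with ε h1 h2 h3
    exact ⟨h1, h2, h3⟩
  constructor
  · -- here the eventually-binder ranges over ℂ with the complex order
    have hNtC : Tendsto (fun ε : ℂ => F22 - (ε * s) • (1 : Matrix (Fin n2) (Fin n2) ℂ))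
        (nhdsWithin ((0 : ℝ) : ℂ) (Set.Ioi 0)) (nhds F22) := by
      have hc : Continuous (fun ε : ℂ =>
          F22 - (ε * s) • (1 : Matrix (Fin n2) (Fin n2) ℂ)) :=
        continuous_const.sub ((continuous_id.mul continuous_const).smul continuous_const)
      have h0 := hc.tendsto ((0 : ℝ) : ℂ)
      simp only [Complex.ofReal_zero, zero_mul, zero_smul, sub_zero] at h0
      exact h0.mono_left nhdsWithin_le_nhds
    obtain ⟨hEinvC, hNunitC⟩ := aux_tendsto_inv_and_isUnit hNtC hF22
    have hStC : Tendsto (fun ε : ℂ => s • (1 : Matrix (Fin n1) (Fin n1) ℂ) - F11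
          + F12 * (F22 - (ε * s) • 1)⁻¹ * F21)
        (nhdsWithin ((0 : ℝ) : ℂ) (Set.Ioi 0))
        (nhds (s • (1 : Matrix (Fin n1) (Fin n1) ℂ) - F11 + F12 * F22⁻¹ * F21)) :=
      (hScont.tendsto _).comp hEinvC
    obtain ⟨hSinvC, hSunitC⟩ := aux_tendsto_inv_and_isUnit hStC hS0unit
    filter_upwards [self_mem_nhdsWithin, hNunitC, hSunitC] with ε h1 h2 h3
    exact (aux_key_algebra F11 F12 F21 F22 G1 G2 H1 H2 K s ε (show ε ≠ 0 from ne_of_gt h1) h2 h3).1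
  · have hΨcont : Continuous (fun p :
        Matrix (Fin n2) (Fin n2) ℂ × Matrix (Fin n1) (Fin n1) ℂ =>
        (H1 - H2 * p.1 * F21) * p.2 * (G1 - F12 * p.1 * G2) + (K - H2 * p.1 * G2)) := by
      have h1 : Continuous (fun p :
          Matrix (Fin n2) (Fin n2) ℂ × Matrix (Fin n1) (Fin n1) ℂ => p.1) := continuous_fst
      have h2 : Continuous (fun p :
          Matrix (Fin n2) (Fin n2) ℂ × Matrix (Fin n1) (Fin n1) ℂ => p.2) := continuous_snd
      exact ((((continuous_const.sub ((continuous_const.matrix_mul h1).matrix_mul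
        continuous_const)).matrix_mul h2).matrix_mul
        (continuous_const.sub ((continuous_const.matrix_mul h1).matrix_mul
          continuous_const))).add
        (continuous_const.sub ((continuous_const.matrix_mul h1).matrix_mul continuous_const)))
    have hpair := hEinv.prodMk_nhds hSinv
    have hlim := (hΨcont.tendsto _).comp hpair
    rw [hS0] at hlim
    refine Tendsto.congr' ?_ hlim
    filter_upwards [hev] with ε h
    exact (aux_key_algebra F11 F12 F21 F22 G1 G2 H1 H2 K s (ε : ℂ)
      (Complex.ofReal_ne_zero.mpr h.1.ne') h.2.1 h.2.2).2.symm
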